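/- For the complete bipartite graph K_{m,n} with 1 ≤ m ≤ n, the simultaneous interval number equals m, i.e., si(K_{m,n}) = min{m,n}. -/
import Mathlib


/-- `(a, b, L)` is a `d`-simultaneous interval representation of `G`:
each vertex `v` gets a nonempty open interval `(a v, b v)` and a label set
`L v ⊆ {1,…,d}`, and distinct vertices are adjacent iff both their intervals
and their label sets intersect. -/
def IsSIRep {V : Type*} (G : SimpleGraph V) (d : ℕ)
    (a b : V → ℝ) (L : V → Finset (Fin d)) : Prop :=
  (∀ v, a v < b v) ∧
  ∀ u v : V, u ≠ v →
    (G.Adj u v ↔ (Set.Ioo (a u) (b u) ∩ Set.Ioo (a v) (b v)).Nonempty ∧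
      (L u ∩ L v).Nonempty)

/-- The simultaneous interval number of `G`. -/
noncomputable def si {V : Type*} (G : SimpleGraph V) : ℕ :=
  sInf {d | ∃ a b L, IsSIRep G d a b L}

/-- Pairwise disjoint nonempty subsets of `Fin d` indexed by `Fin k` force `k ≤ d`. -/
lemma card_le_of_pairwise_disjoint {k d : ℕ} (S : Fin k → Finset (Fin d))
    (hne : ∀ i, (S i).Nonempty)
    (hdisj : ∀ i j, i ≠ j → ¬(S i ∩ S j).Nonempty) : k ≤ d := by
  have hf : Function.Injective fun i => (hne i).choose := by
    intro i j hij
    have hij' : (hne i).choose = (hne j).choose := hij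
    by_contra hne'
    refine hdisj i j hne' ⟨(hne i).choose, Finset.mem_inter.2 ⟨(hne i).choose_spec, ?_⟩⟩
    rw [hij']; exact (hne j).choose_spec
  simpa using Fintype.card_le_of_injective _ hf

lemma si_lower {m n d : ℕ} (h1 : 1 ≤ m) (h2 : m ≤ n)
    (a b : Fin m ⊕ Fin n → ℝ) (L : Fin m ⊕ Fin n → Finset (Fin d))
    (h : IsSIRep (completeBipartiteGraph (Fin m) (Fin n)) d a b L) : m ≤ d := by
  obtain ⟨hab, hadj⟩ := h
  set j0 : Fin n := ⟨0, by omega⟩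
  set i0 : Fin m := ⟨0, h1⟩
  -- adjacency facts
  have hadjLR : ∀ (i : Fin m) (j : Fin n),
      (Set.Ioo (a (.inl i)) (b (.inl i)) ∩ Set.Ioo (a (.inr j)) (b (.inr j))).Nonempty ∧
      (L (.inl i) ∩ L (.inr j)).Nonempty := by
    intro i j
    exact (hadj (.inl i) (.inr j) (by simp)).1 (by simp)
  by_cases hc : ∀ i i' : Fin m, i ≠ i' →
      (Set.Ioo (a (.inl i)) (b (.inl i)) ∩ Set.Ioo (a (.inl i')) (b (.inl i'))).Nonempty
  · -- left intervals pairwise intersect, hence left labels pairwise disjoint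
    refine card_le_of_pairwise_disjoint (fun i => L (.inl i))
      (fun i => ((hadjLR i j0).2).elim fun x hx => ⟨x, (Finset.mem_inter.1 hx).1⟩) ?_
    intro i i' hii hlab
    have := (hadj (.inl i) (.inl i') (by simpa using hii)).2 ⟨hc i i' hii, hlab⟩
    simp at this
  · push_neg at hc
    obtain ⟨i, i', hii, hdis⟩ := hc
    rw [Set.Ioo_inter_Ioo, Set.Ioo_eq_empty_iff, not_lt] at hdis
    -- key: if some left interval ends before another begins, all right intervals share a point
    have key : ∀ p q : Fin m, b (.inl p) ≤ a (.inl q) → m ≤ d := by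
      intro p q hpq
      have ht : ∀ j : Fin n, b (.inl p) ∈ Set.Ioo (a (.inr j)) (b (.inr j)) := by
        intro j
        obtain ⟨x, hx1, hx2⟩ := (hadjLR p j).1
        obtain ⟨y, hy1, hy2⟩ := (hadjLR q j).1
        exact ⟨hx2.1.trans hx1.2, lt_of_le_of_lt (hpq.trans hy1.1.le) hy2.2⟩
      have hn : n ≤ d := by
        refine card_le_of_pairwise_disjoint (fun j => L (.inr j))
          (fun j => ((hadjLR i0 j).2).elim fun x hx => ⟨x, (Finset.mem_inter.1 hx).2⟩) ?_
        intro j j' hjj hlab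
        have hint : (Set.Ioo (a (.inr j)) (b (.inr j)) ∩
            Set.Ioo (a (.inr j')) (b (.inr j'))).Nonempty :=
          ⟨b (.inl p), ht j, ht j'⟩
        have := (hadj (.inr j) (.inr j') (by simpa using hjj)).2 ⟨hint, hlab⟩
        simp at this
      omega
    rcases inf_le_iff.1 hdis with h' | h'
    · rcases le_sup_iff.1 h' with h'' | h''
      · exact absurd h'' (not_le.2 (hab _))
      · exact key i i' h''
    · rcases le_sup_iff.1 h' with h'' | h''
      · exact key i' i h''
      · exact absurd h'' (not_le.2 (hab _))

lemma si_upper (m n : ℕ) (h1 : 1 ≤ m) :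
    ∃ a b L, IsSIRep (completeBipartiteGraph (Fin m) (Fin n)) m a b L := by
  refine ⟨Sum.elim (fun _ => 0) (fun j => (j : ℝ)),
    Sum.elim (fun _ => (n : ℝ) + 1) (fun j => (j : ℝ) + 1),
    Sum.elim (fun i => {i}) (fun _ => Finset.univ), ?_, ?_⟩
  · rintro (i | j) <;> simp <;> positivity
  · rintro (i | j) (i' | j') huv <;>
      simp only [Sum.elim_inl, Sum.elim_inr]
    · -- left-left : non-adjacent, labels disjoint
      have hii : i ≠ i' := fun h => huv (by rw [h])
      constructor
      · intro h; simp at h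
      · rintro ⟨-, x, hx⟩
        simp only [Finset.mem_inter, Finset.mem_singleton] at hx
        exact ((hii (hx.1.symm.trans hx.2)).elim : _)
    · -- left-right : adjacent
      constructor
      · intro _
        refine ⟨⟨(j' : ℝ) + 1/2, ⟨by positivity, ?_⟩, by norm_num, by norm_num⟩, ⟨i, by simp⟩⟩
        have : (j' : ℝ) < n := by exact_mod_cast j'.isLt
        linarith
      · intro _; simp
    · -- right-left : adjacent
      constructor
      · intro _
        refine ⟨⟨(j : ℝ) + 1/2, ⟨by norm_num, by norm_num⟩, by positivity, ?_⟩, ⟨i', by simp⟩⟩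
        have : (j : ℝ) < n := by exact_mod_cast j.isLt
        linarith
      · intro _; simp
    · -- right-right : non-adjacent, intervals disjoint
      have hne : (j : ℕ) ≠ (j' : ℕ) := fun hh => huv (by simpa [Fin.ext_iff] using hh)
      constructor
      · intro h; simp at h
      · rintro ⟨⟨x, ⟨hx1, hx2⟩, hx3, hx4⟩, -⟩
        exfalso
        rcases hne.lt_or_gt with hlt | hlt
        · have : ((j : ℕ) : ℝ) + 1 ≤ ((j' : ℕ) : ℝ) := by exact_mod_cast hlt
          linarith
        · have : ((j' : ℕ) : ℝ) + 1 ≤ ((j : ℕ) : ℝ) := by exact_mod_cast hlt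
          linarith

/-- For `1 ≤ m ≤ n`, the complete bipartite graph `K_{m,n}` has simultaneous
interval number `min m n`. -/
theorem si_completeBipartiteGraph (m n : ℕ) (h1 : 1 ≤ m) (h2 : m ≤ n) :
    si (completeBipartiteGraph (Fin m) (Fin n)) = min m n := by
  rw [min_eq_left h2, si]
  have hmem : m ∈ {d | ∃ a b L, IsSIRep (completeBipartiteGraph (Fin m) (Fin n)) d a b L} :=
    si_upper m n h1
  refine le_antisymm (Nat.sInf_le hmem) (le_csInf ⟨m, hmem⟩ ?_)
  rintro d ⟨a, b, L, hrep⟩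
  exact si_lower h1 h2 a b L hrep
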